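/- Let Γ be a totally ordered commutative additive group. Let (γ_1 ≥ γ_2 ≥ ⋯ ≥ γ_p) and (δ_1 ≥ δ_2 ≥ ⋯ ≥ δ_q) be nonincreasing finite sequences in Γ, and let (ε_1 ≥ ε_2 ≥ ⋯ ≥ ε_{p+q}) be the nonincreasing rearrangement of the concatenation of the two sequences. Then for every integer 0 ≤ r ≤ p+q: Σ_{i=1}^{r} ε_i = max { Σ_{i=1}^{s} γ_i + Σ_{i=1}^{t} δ_i : 0 ≤ s ≤ p, 0 ≤ t ≤ q, s + t = r }. (This identifies the partial sums of the convex sum γ ∗ δ of two types with the sup-convolution formula f_1 ∗ f_2(r) = max{ f_1(s) + f_2(t) : s+t=r } for the associated concave partial-sum functions.) -/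

import Mathlib

open Finset

private lemma aux_strictMono_le {r n : ℕ} {g : Fin r → Fin n} (hg : StrictMono g) :
    ∀ k (hk : k < r), k ≤ (g ⟨k, hk⟩ : ℕ) := by
  intro k
  induction k with
  | zero => intro _; exact Nat.zero_le _
  | succ m ih =>
    intro hk
    have hm : m < r := Nat.lt_of_succ_lt hk
    have h2 : g ⟨m, hm⟩ < g ⟨m + 1, hk⟩ := hg (Fin.mk_lt_mk.mpr (Nat.lt_succ_self m))
    have h3 := ih hm
    have h4 := Fin.lt_def.mp h2
    omega

private lemma aux_filter_eq {n r : ℕ} (hr : r ≤ n) :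
    (Finset.univ.filter fun i : Fin n => (i : ℕ) < r) =
      Finset.map (Fin.castLEEmb hr) Finset.univ := by
  ext i
  simp only [mem_filter, mem_univ, true_and, mem_map, Fin.castLEEmb]
  constructor
  · intro h; exact ⟨⟨i, h⟩, rfl⟩
  · rintro ⟨j, -, rfl⟩; simp

private lemma aux_filter_card {n r : ℕ} (hr : r ≤ n) :
    (Finset.univ.filter fun i : Fin n => (i : ℕ) < r).card = r := by
  rw [aux_filter_eq hr, Finset.card_map, Finset.card_univ, Fintype.card_fin]

private lemma aux_exists_preimage {α β : Type*} {f : α → β} :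
    ∀ {M : Multiset β} {s : Multiset α}, M ≤ s.map f → ∃ s' ≤ s, M = s'.map f := by
  classical
  intro M
  induction M using Multiset.induction with
  | empty => intro s _; exact ⟨0, by simp, by simp⟩
  | cons a M ih =>
    intro s h
    have ha : a ∈ s.map f := Multiset.mem_of_le h (Multiset.mem_cons_self a M)
    obtain ⟨x, hx, rfl⟩ := Multiset.mem_map.mp ha
    have h2 : M ≤ (s.map f).erase (f x) := by
      have := Multiset.erase_le_erase (f x) h
      simpa using this
    have h3 : M ≤ (s.erase x).map f := by
      rwa [← Multiset.map_erase_of_mem f s hx] at h2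
    obtain ⟨s', hs', rfl⟩ := ih h3
    refine ⟨x ::ₘ s', ?_, by simp⟩
    calc x ::ₘ s' ≤ x ::ₘ s.erase x := Multiset.cons_le_cons x hs'
    _ = s := Multiset.cons_erase hx

/-- The sum of any size-`r` sub-multiset of the values of an antitone sequence is at most the
sum of the first `r` values. -/
private lemma aux_sum_le {Γ : Type*} [AddCommGroup Γ] [LinearOrder Γ] [IsOrderedAddMonoid Γ] {n r : ℕ}
    {f : Fin n → Γ} (hf : Antitone f) {M : Multiset Γ}
    (hM : M ≤ Multiset.map f Finset.univ.val) (hcard : Multiset.card M = r) :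
    M.sum ≤ ∑ i ∈ Finset.univ.filter fun i : Fin n => (i : ℕ) < r, f i := by
  obtain ⟨s', hs', rfl⟩ := aux_exists_preimage hM
  have hnd : s'.Nodup := Multiset.nodup_of_le hs' Finset.univ.nodup
  set T : Finset (Fin n) := ⟨s', hnd⟩ with hT
  have hTcard : T.card = r := by
    simpa [Finset.card, hT] using hcard
  have hr : r ≤ n := by
    rw [← hTcard]
    simpa using T.card_le_univ
  have hsum : (s'.map f).sum = ∑ i ∈ T, f i := rfl
  rw [hsum, aux_filter_eq hr, Finset.sum_map]
  -- rewrite sum over T via orderEmbOfFin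
  have e := T.orderEmbOfFin hTcard
  have hTmap : T = Finset.map (T.orderEmbOfFin hTcard).toEmbedding Finset.univ := by
    have hrange := Finset.range_orderEmbOfFin T hTcard
    ext x
    simp only [Finset.mem_map, Finset.mem_univ, true_and, RelEmbedding.coe_toEmbedding]
    constructor
    · intro hx
      have : x ∈ Set.range (T.orderEmbOfFin hTcard) := hrange ▸ Finset.mem_coe.mpr hx
      obtain ⟨j, hj⟩ := this
      exact ⟨j, hj⟩
    · rintro ⟨j, rfl⟩
      exact Finset.orderEmbOfFin_mem T hTcard j
  rw [hTmap, Finset.sum_map]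
  apply Finset.sum_le_sum
  intro j _
  apply hf
  have := aux_strictMono_le (T.orderEmbOfFin hTcard).strictMono j.1 j.2
  simpa [Fin.le_def, Fin.castLEEmb] using this

theorem statement12 {Γ : Type*} [AddCommGroup Γ] [LinearOrder Γ] [IsOrderedAddMonoid Γ]
    {p q : ℕ} (γ : Fin p → Γ) (δ : Fin q → Γ) (ε : Fin (p + q) → Γ)
    (hγ : Antitone γ) (hδ : Antitone δ) (hε : Antitone ε)
    (hconcat : Multiset.map γ Finset.univ.val + Multiset.map δ Finset.univ.val =
      Multiset.map ε Finset.univ.val) :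
    ∀ r : ℕ, r ≤ p + q →
      IsGreatest
        {v : Γ | ∃ s t : ℕ, s ≤ p ∧ t ≤ q ∧ s + t = r ∧
          v = (∑ i ∈ Finset.univ.filter fun i : Fin p => (i : ℕ) < s, γ i) +
              (∑ i ∈ Finset.univ.filter fun i : Fin q => (i : ℕ) < t, δ i)}
        (∑ i ∈ Finset.univ.filter fun i : Fin (p + q) => (i : ℕ) < r, ε i) := by
  classical
  intro r hr
  -- Upper bound part (used twice)
  have hub : ∀ v ∈ {v : Γ | ∃ s t : ℕ, s ≤ p ∧ t ≤ q ∧ s + t = r ∧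
          v = (∑ i ∈ Finset.univ.filter fun i : Fin p => (i : ℕ) < s, γ i) +
              (∑ i ∈ Finset.univ.filter fun i : Fin q => (i : ℕ) < t, δ i)},
      v ≤ ∑ i ∈ Finset.univ.filter fun i : Fin (p + q) => (i : ℕ) < r, ε i := by
    rintro v ⟨s, t, hs, ht, hst, rfl⟩
    set Ms : Multiset Γ :=
      (Finset.univ.filter fun i : Fin p => (i : ℕ) < s).val.map γ with hMs
    set Mt : Multiset Γ :=
      (Finset.univ.filter fun i : Fin q => (i : ℕ) < t).val.map δ with hMt
    have hsum1 : (∑ i ∈ Finset.univ.filter fun i : Fin p => (i : ℕ) < s, γ i) = Ms.sum := rfl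
    have hsum2 : (∑ i ∈ Finset.univ.filter fun i : Fin q => (i : ℕ) < t, δ i) = Mt.sum := rfl
    rw [hsum1, hsum2, ← Multiset.sum_add]
    apply aux_sum_le hε
    · rw [← hconcat]
      exact add_le_add
        (Multiset.map_le_map (Finset.val_le_iff.mpr (Finset.filter_subset _ _)))
        (Multiset.map_le_map (Finset.val_le_iff.mpr (Finset.filter_subset _ _)))
    · simp only [Multiset.card_add, Multiset.card_map, hMs, hMt]
      rw [show ((Finset.univ.filter fun i : Fin p => (i : ℕ) < s)).val.card
            = (Finset.univ.filter fun i : Fin p => (i : ℕ) < s).card from rfl]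
      rw [show ((Finset.univ.filter fun i : Fin q => (i : ℕ) < t)).val.card
            = (Finset.univ.filter fun i : Fin q => (i : ℕ) < t).card from rfl]
      rw [aux_filter_card hs, aux_filter_card ht, hst]
  constructor
  · -- membership
    set M : Multiset Γ :=
      (Finset.univ.filter fun i : Fin (p + q) => (i : ℕ) < r).val.map ε with hM
    have hMle : M ≤ Multiset.map ε Finset.univ.val :=
      Multiset.map_le_map (Finset.val_le_iff.mpr (Finset.filter_subset _ _))
    have hMcard : Multiset.card M = r := by
      simp only [hM, Multiset.card_map]
      rw [show ((Finset.univ.filter fun i : Fin (p + q) => (i : ℕ) < r)).val.card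
            = (Finset.univ.filter fun i : Fin (p + q) => (i : ℕ) < r).card from rfl]
      exact aux_filter_card hr
    set A : Multiset Γ := M ∩ Multiset.map γ Finset.univ.val with hA
    set B : Multiset Γ := M - A with hB
    have hAleM : A ≤ M := Multiset.inter_le_left
    have hAle : A ≤ Multiset.map γ Finset.univ.val := Multiset.inter_le_right
    have hAB : A + B = M := by
      rw [hB, add_tsub_cancel_of_le hAleM]
    have hBle : B ≤ Multiset.map δ Finset.univ.val := by
      rw [Multiset.le_iff_count]
      intro x
      have h1 : Multiset.count x M ≤ Multiset.count x (Multiset.map γ Finset.univ.val)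
          + Multiset.count x (Multiset.map δ Finset.univ.val) := by
        have := Multiset.le_iff_count.mp hMle x
        rw [← hconcat, Multiset.count_add] at this
        exact this
      have h2 : Multiset.count x A =
          min (Multiset.count x M) (Multiset.count x (Multiset.map γ Finset.univ.val)) :=
        Multiset.count_inter x _ _
      have h3 : Multiset.count x B = Multiset.count x M - Multiset.count x A :=
        Multiset.count_sub x M A
      omega
    set s := Multiset.card A with hsdef
    set t := Multiset.card B with htdef
    have hs : s ≤ p := by
      have := Multiset.card_le_card hAle
      simpa [hsdef] using this
    have ht : t ≤ q := by
      have := Multiset.card_le_card hBle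
      simpa [htdef] using this
    have hst : s + t = r := by
      rw [hsdef, htdef, ← Multiset.card_add, hAB, hMcard]
    have hA_sum : A.sum ≤ ∑ i ∈ Finset.univ.filter fun i : Fin p => (i : ℕ) < s, γ i :=
      aux_sum_le hγ hAle rfl
    have hB_sum : B.sum ≤ ∑ i ∈ Finset.univ.filter fun i : Fin q => (i : ℕ) < t, δ i :=
      aux_sum_le hδ hBle rfl
    have hMsum : (∑ i ∈ Finset.univ.filter fun i : Fin (p + q) => (i : ℕ) < r, ε i)
        = M.sum := rfl
    have hle1 : (∑ i ∈ Finset.univ.filter fun i : Fin (p + q) => (i : ℕ) < r, ε i)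
        ≤ (∑ i ∈ Finset.univ.filter fun i : Fin p => (i : ℕ) < s, γ i) +
          (∑ i ∈ Finset.univ.filter fun i : Fin q => (i : ℕ) < t, δ i) := by
      rw [hMsum, ← hAB, Multiset.sum_add]
      exact add_le_add hA_sum hB_sum
    have hle2 : (∑ i ∈ Finset.univ.filter fun i : Fin p => (i : ℕ) < s, γ i) +
          (∑ i ∈ Finset.univ.filter fun i : Fin q => (i : ℕ) < t, δ i)
        ≤ ∑ i ∈ Finset.univ.filter fun i : Fin (p + q) => (i : ℕ) < r, ε i :=
      hub _ ⟨s, t, hs, ht, hst, rfl⟩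
    exact ⟨s, t, hs, ht, hst, le_antisymm hle1 hle2⟩
  · exact hub
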